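/- Let X be a nondegenerate continuum with metric d. Then there exists ε₀ > 0 such that for every ε ∈ (0, ε₀) there exists a family of pairwise disjoint subcontinua of X of cardinality strictly greater than 1/√ε, each of which has diameter at least ε/3. -/
import Mathlib

open Metric Set

lemma exists_clopen_of_disjoint_component {Y : Type*} [TopologicalSpace Y] [CompactSpace Y]
    [T2Space Y] {x : Y} {T : Set Y} (hT : IsClosed T)
    (h : Disjoint (connectedComponent x) T) :
    ∃ V : Set Y, IsClopen V ∧ x ∈ V ∧ Disjoint V T := by
  by_contra hc
  push_neg at hc
  have hne : (T ∩ ⋂ s : { s : Set Y // IsClopen s ∧ x ∈ s }, (s : Set Y)).Nonempty := by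
    apply hT.isCompact.inter_iInter_nonempty _ (fun s => s.2.1.1)
    intro u
    have hV : IsClopen (⋂ i ∈ u, (i : Set Y)) := isClopen_biInter_finset (fun i _ => i.2.1)
    have hxV : x ∈ ⋂ i ∈ u, (i : Set Y) := by
      simp only [mem_iInter]; exact fun i _ => i.2.2
    have := hc _ hV hxV
    rw [not_disjoint_iff_nonempty_inter] at this
    rw [inter_comm]; exact this
  rw [← connectedComponent_eq_iInter_isClopen x, inter_comm,
    ← not_disjoint_iff_nonempty_inter] at hne
  exact hne h

lemma cut_wire {X : Type*} [TopologicalSpace X] [CompactSpace X] [T2Space X] [ConnectedSpace X]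
    {f : X → ℝ} (hf : Continuous f) {s t : ℝ} (hst : s < t)
    (hs : ∃ a, f a ≤ s) (ht : ∃ b, t ≤ f b) :
    ∃ K : Set X, IsCompact K ∧ IsConnected K ∧ (∃ x ∈ K, f x = s) ∧ (∃ y ∈ K, f y = t) ∧
      ∀ z ∈ K, f z ∈ Icc s t := by
  obtain ⟨a, ha⟩ := hs
  obtain ⟨b, hb⟩ := ht
  have hsr : ∃ x₀ : X, f x₀ = s := by
    have : s ∈ range f := mem_range_of_exists_le_of_exists_ge hf ⟨a, ha⟩ ⟨b, hst.le.trans hb⟩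
    exact this.imp fun x hx => hx
  have htr : ∃ y₀ : X, f y₀ = t := by
    have : t ∈ range f := mem_range_of_exists_le_of_exists_ge hf ⟨a, ha.trans hst.le⟩ ⟨b, hb⟩
    exact this.imp fun x hx => hx
  set C : Set X := f ⁻¹' (Icc s t) with hCdef
  have hC : IsClosed C := isClosed_Icc.preimage hf
  haveI : CompactSpace C := isCompact_iff_compactSpace.mp hC.isCompact
  set T' : Set C := {z : C | f z.1 = t} with hT'def
  have hT'closed : IsClosed T' :=
    isClosed_singleton.preimage (hf.comp continuous_subtype_val)
  by_cases H : ∃ x' : C, f x'.1 = s ∧ ¬ Disjoint (connectedComponent x') T'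
  · obtain ⟨x', hx's, hmeet⟩ := H
    rw [not_disjoint_iff] at hmeet
    obtain ⟨y', hy'c, hy't⟩ := hmeet
    refine ⟨Subtype.val '' connectedComponent x', ?_, ?_, ?_, ?_, ?_⟩
    · exact (isClosed_connectedComponent.isCompact).image continuous_subtype_val
    · exact isConnected_connectedComponent.image _ continuous_subtype_val.continuousOn
    · exact ⟨x'.1, mem_image_of_mem _ mem_connectedComponent, hx's⟩
    · exact ⟨y'.1, mem_image_of_mem _ hy'c, hy't⟩
    · rintro z ⟨z', _, rfl⟩; exact z'.2
  · exfalso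
    push_neg at H
    set S' : Set C := {z : C | f z.1 = s} with hS'def
    have hS'closed : IsClosed S' :=
      isClosed_singleton.preimage (hf.comp continuous_subtype_val)
    have hchoice : ∀ x' : C, ∃ V : Set C, x' ∈ S' → IsClopen V ∧ x' ∈ V ∧ Disjoint V T' := by
      intro x'
      by_cases hx' : x' ∈ S'
      · obtain ⟨V, h1, h2, h3⟩ :=
          exists_clopen_of_disjoint_component hT'closed (H x' hx')
        exact ⟨V, fun _ => ⟨h1, h2, h3⟩⟩
      · exact ⟨∅, fun h => absurd h hx'⟩
    choose V hV using hchoice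
    obtain ⟨b', hb'sub, hb'fin, hb'cov⟩ :=
      hS'closed.isCompact.elim_finite_subcover_image
        (b := S') (c := V) (fun i hi => ((hV i hi).1).2)
        (fun z hz => mem_biUnion hz (hV z hz).2.1)
    set W : Set C := ⋃ i ∈ b', V i with hWdef
    have hWclopen : IsClopen W := by
      refine Set.Finite.isClopen_biUnion hb'fin fun i hi => (hV i (hb'sub hi)).1
    have hSW : S' ⊆ W := hb'cov
    have hWT : Disjoint W T' := by
      rw [disjoint_iUnion₂_left]
      exact fun i hi => (hV i (hb'sub hi)).2.2
    -- now derive a disconnection of X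
    set A : Set X := f ⁻¹' (Iic s) ∪ Subtype.val '' W with hAdef
    set B : Set X := f ⁻¹' (Ici t) ∪ Subtype.val '' Wᶜ with hBdef
    have hAclosed : IsClosed A :=
      (isClosed_Iic.preimage hf).union
        ((hWclopen.1.isCompact.image continuous_subtype_val).isClosed)
    have hBclosed : IsClosed B :=
      (isClosed_Ici.preimage hf).union
        ((hWclopen.2.isClosed_compl.isCompact.image continuous_subtype_val).isClosed)
    have hcov : (univ : Set X) ⊆ A ∪ B := by
      intro x _
      rcases le_or_gt (f x) s with h1 | h1
      · exact Or.inl (Or.inl h1)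
      rcases le_or_gt t (f x) with h2 | h2
      · exact Or.inr (Or.inl h2)
      have hxC : x ∈ C := ⟨h1.le, h2.le⟩
      by_cases hw : (⟨x, hxC⟩ : C) ∈ W
      · exact Or.inl (Or.inr ⟨⟨x, hxC⟩, hw, rfl⟩)
      · exact Or.inr (Or.inr ⟨⟨x, hxC⟩, hw, rfl⟩)
    have hdisj : Disjoint A B := by
      rw [Set.disjoint_left]
      rintro x (hx | ⟨z, hz, rfl⟩) hxB
      · rcases hxB with h2 | ⟨z, hz, rfl⟩
        · exact absurd (hx.trans_lt hst) (not_lt.mpr h2)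
        · have hzs : z ∈ S' := le_antisymm hx z.2.1
          exact hz (hSW hzs)
      · rcases hxB with h2 | ⟨w, hw, hwz⟩
        · have hzt : z ∈ T' := le_antisymm z.2.2 h2
          exact (Set.disjoint_left.mp hWT hz) hzt
        · have : w = z := Subtype.val_injective hwz
          exact hw (this ▸ hz)
    have hpc := (isPreconnected_iff_subset_of_fully_disjoint_closed isClosed_univ).mp
      isPreconnected_univ A B hAclosed hBclosed hcov hdisj
    obtain ⟨x₀, hx₀⟩ := hsr
    obtain ⟨y₀, hy₀⟩ := htr
    rcases hpc with hall | hall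
    · have : y₀ ∈ A := hall (mem_univ _)
      rcases this with h1 | ⟨z, hz, rfl⟩
      · exact absurd (hy₀ ▸ h1) (not_le.mpr hst)
      · have hzt : z ∈ T' := hy₀
        exact (Set.disjoint_left.mp hWT hz) hzt
    · have : x₀ ∈ B := hall (mem_univ _)
      rcases this with h1 | ⟨z, hz, rfl⟩
      · exact absurd (hx₀ ▸ h1) (not_le.mpr hst)
      · have hzs : z ∈ S' := hx₀
        exact hz (hSW hzs)

theorem exists_many_disjoint_subcontinua
    {X : Type*} [MetricSpace X] [CompactSpace X] [ConnectedSpace X] [Nontrivial X] :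
    ∃ ε₀ > (0 : ℝ), ∀ ε ∈ Set.Ioo (0 : ℝ) ε₀, ∃ 𝒜 : Set (Set X), 𝒜.Finite ∧
      1 / Real.sqrt ε < (𝒜.ncard : ℝ) ∧
      (∀ A ∈ 𝒜, IsCompact A ∧ IsConnected A ∧ ε / 3 ≤ Metric.diam A) ∧
      𝒜.Pairwise Disjoint := by
  obtain ⟨a, b, hab⟩ := exists_pair_ne X
  set D : ℝ := dist b a with hD
  have hD0 : 0 < D := dist_pos.mpr (Ne.symm hab)
  refine ⟨min 1 (D ^ 2), lt_min one_pos (by positivity), ?_⟩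
  rintro ε ⟨hε0, hε1⟩
  have hεle1 : ε < 1 := hε1.trans_le (min_le_left _ _)
  have hεD : ε < D ^ 2 := hε1.trans_le (min_le_right _ _)
  have hsqrt0 : 0 < Real.sqrt ε := Real.sqrt_pos.mpr hε0
  have hsqrtD : Real.sqrt ε < D := by
    have := Real.sqrt_lt_sqrt hε0.le hεD
    rwa [Real.sqrt_sq hD0.le] at this
  have hεsqrt : ε ≤ Real.sqrt ε := by
    nlinarith [Real.sq_sqrt hε0.le, Real.sqrt_nonneg ε]
  set N : ℕ := ⌊1 / Real.sqrt ε⌋₊ + 1 with hN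
  set f : X → ℝ := fun x => dist x a with hf
  have hfc : Continuous f := continuous_id.dist continuous_const
  set sk : ℕ → ℝ := fun k => k * (ε / 2) with hsk
  set tk : ℕ → ℝ := fun k => k * (ε / 2) + ε / 3 with htk
  have hkbound : ∀ k : ℕ, k < N → tk k ≤ D := by
    intro k hk
    have hk' : (k : ℝ) ≤ 1 / Real.sqrt ε := by
      have : k ≤ ⌊1 / Real.sqrt ε⌋₊ := Nat.lt_succ_iff.mp hk
      exact le_trans (Nat.cast_le.mpr this) (Nat.floor_le (by positivity))
    have h1 : (k : ℝ) * (ε / 2) ≤ Real.sqrt ε / 2 := by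
      have : (k : ℝ) * ε ≤ (1 / Real.sqrt ε) * ε :=
        mul_le_mul_of_nonneg_right hk' hε0.le
      rw [one_div, inv_mul_eq_div, Real.div_sqrt] at this
      linarith
    simp only [htk]
    linarith [h1, hsqrtD, hεsqrt, hε0, hD0]
  have key : ∀ k : ℕ, ∃ K : Set X, k < N →
      IsCompact K ∧ IsConnected K ∧ (∃ x ∈ K, f x = sk k) ∧ (∃ y ∈ K, f y = tk k) ∧
        ∀ z ∈ K, f z ∈ Icc (sk k) (tk k) := by
    intro k
    by_cases hk : k < N
    · have hst : sk k < tk k := by simp only [hsk, htk]; linarith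
      have hs : ∃ x, f x ≤ sk k := ⟨a, by simp [hf, hsk]; positivity⟩
      have ht : ∃ x, tk k ≤ f x := ⟨b, hkbound k hk⟩
      obtain ⟨K, h1, h2, h3, h4, h5⟩ := cut_wire hfc hst hs ht
      exact ⟨K, fun _ => ⟨h1, h2, h3, h4, h5⟩⟩
    · exact ⟨∅, fun h => absurd h hk⟩
  choose K hK using key
  have hdisj : ∀ k l, k < N → l < N → k < l → Disjoint (K k) (K l) := by
    intro k l hkN hlN hkl
    rw [Set.disjoint_left]
    intro z hzk hzl
    have h1 := ((hK k hkN).2.2.2.2 z hzk).2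
    have h2 := ((hK l hlN).2.2.2.2 z hzl).1
    have hkl' : (k : ℝ) + 1 ≤ l := by exact_mod_cast hkl
    simp only [hsk, htk] at h1 h2
    nlinarith
  have hdisj' : ∀ k l, k < N → l < N → k ≠ l → Disjoint (K k) (K l) := by
    intro k l hkN hlN hne
    rcases hne.lt_or_gt with h | h
    · exact hdisj k l hkN hlN h
    · exact (hdisj l k hlN hkN h).symm
  have hne : ∀ k, k < N → (K k).Nonempty := by
    intro k hk
    obtain ⟨x, hx, _⟩ := (hK k hk).2.2.1
    exact ⟨x, hx⟩
  have hinj : Set.InjOn K (Set.Iio N) := by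
    intro k hk l hl hkl
    by_contra hne'
    have := hdisj' k l hk hl hne'
    rw [hkl] at this
    exact ((hne l hl).ne_empty) (by simpa using disjoint_self.mp this)
  refine ⟨K '' Set.Iio N, (Set.finite_Iio N).image K, ?_, ?_, ?_⟩
  · rw [Set.ncard_image_of_injOn hinj, ← Finset.coe_range, Set.ncard_coe_finset,
      Finset.card_range]
    have := Nat.lt_floor_add_one (1 / Real.sqrt ε)
    exact_mod_cast this
  · rintro A ⟨k, hk, rfl⟩
    obtain ⟨h1, h2, ⟨x, hx, hfx⟩, ⟨y, hy, hfy⟩, h5⟩ := hK k hk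
    refine ⟨h1, h2, ?_⟩
    have hdist : ε / 3 ≤ dist x y := by
      have := abs_dist_sub_le y x a
      have heq : dist y a - dist x a = ε / 3 := by
        simp only [hf] at hfx hfy
        simp only [hsk, htk] at hfx hfy
        linarith
      rw [dist_comm]
      calc ε / 3 = |dist y a - dist x a| := by rw [heq]; exact (abs_of_pos (by positivity)).symm
        _ ≤ dist y x := this
    exact hdist.trans (Metric.dist_le_diam_of_mem h1.isBounded hx hy)
  · rintro A ⟨k, hk, rfl⟩ B ⟨l, hl, rfl⟩ hAB
    exact hdisj' k l hk hl (fun h => hAB (by rw [h]))
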